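/- Let E, V, P be finite-dimensional real inner product spaces, R : V →ₗ[ℝ] E and D : E →ₗ[ℝ] P linear maps with D ∘ R = 0, T : E →ₗ[ℝ] V a linear map, and constants c ≥ 0, C_P ≥ 0 with ‖T B‖_V ≤ c‖B‖_E for all B ∈ E and ‖v‖_V ≤ C_P‖R v‖_E for all v ∈ V. Fix θ with 0 < θ ≤ 1 and τ > 0 with c√τ < 1. Then for every F ∈ E with D F = 0 and every linear functional g : V →ₗ[ℝ] ℝ there exists a unique pair (B,e) ∈ E × V such that: for all w ∈ E, τ⁻¹⟪B,w⟫_E + ⟪R e,w⟫_E = ⟪F,w⟫_E, and for all v ∈ V, ⟪e,v⟫_V + θ⟪T B,v⟫_V - θ⟪B,R v⟫_E = g(v). Moreover D B = 0 and ‖(B,e)‖_{X,τ} ≤ Ĉ⁻¹·(√τ·‖F‖_E + G), where G is the operator norm of g with respect to ‖·‖_V, Ĉ = (1 - c√τ)(θ/2)(1 + θ²/2)^{-1/2}, and ‖(B,e)‖_{X,τ}² = ‖e‖_V² + τ‖R e‖_E² + τ⁻¹‖B‖_E² + ‖D B‖_P². In particular the solution map (F,g) ↦ (B,e) is continuous uniformly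 in τ (and in the mesh). -/

import Mathlib

open RealInnerProductSpace

set_option maxHeartbeats 4000000 in
/-- Wellposedness of one step of the θ-scheme (Problem A): existence,
uniqueness, divergence-free magnetic flux and a stability bound uniform in τ
and in the mesh. -/
theorem wellposedness_problem_A
    {E V P : Type*}
    [NormedAddCommGroup E] [InnerProductSpace ℝ E] [FiniteDimensional ℝ E]
    [NormedAddCommGroup V] [InnerProductSpace ℝ V] [FiniteDimensional ℝ V]
    [NormedAddCommGroup P] [InnerProductSpace ℝ P] [FiniteDimensional ℝ P]
    (R : V →ₗ[ℝ] E) (D : E →ₗ[ℝ] P) (hDR : D ∘ₗ R = 0)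
    (T : E →ₗ[ℝ] V) (c C_P : ℝ) (hc : 0 ≤ c) (hCP : 0 ≤ C_P)
    (hT : ∀ B : E, ‖T B‖ ≤ c * ‖B‖)
    (hPoincare : ∀ v : V, ‖v‖ ≤ C_P * ‖R v‖)
    (θ : ℝ) (hθ0 : 0 < θ) (hθ1 : θ ≤ 1)
    (τ : ℝ) (hτ : 0 < τ) (hsmall : c * Real.sqrt τ < 1) :
    ∀ F : E, D F = 0 → ∀ g : V →ₗ[ℝ] ℝ,
      (∃! ξ : E × V,
        (∀ w : E, τ⁻¹ * ⟪ξ.1, w⟫ + ⟪R ξ.2, w⟫ = ⟪F, w⟫) ∧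
        (∀ v : V, ⟪ξ.2, v⟫ + θ * ⟪T ξ.1, v⟫ - θ * ⟪ξ.1, R v⟫ = g v)) ∧
      (∀ (B : E) (e : V),
        ((∀ w : E, τ⁻¹ * ⟪B, w⟫ + ⟪R e, w⟫ = ⟪F, w⟫) ∧
         (∀ v : V, ⟪e, v⟫ + θ * ⟪T B, v⟫ - θ * ⟪B, R v⟫ = g v)) →
        D B = 0 ∧
        Real.sqrt (‖e‖ ^ 2 + τ * ‖R e‖ ^ 2 + τ⁻¹ * ‖B‖ ^ 2 + ‖D B‖ ^ 2)
          ≤ ((1 - c * Real.sqrt τ) * (θ / 2) * (Real.sqrt (1 + θ ^ 2 / 2))⁻¹)⁻¹ *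
              (Real.sqrt τ * ‖F‖ + ‖LinearMap.toContinuousLinearMap g‖)) := by
  intro F hF g
  set s : ℝ := Real.sqrt τ with hs_def
  have hs : 0 < s := Real.sqrt_pos.mpr hτ
  have hs2 : s ^ 2 = τ := Real.sq_sqrt hτ.le
  set G : ℝ := ‖LinearMap.toContinuousLinearMap g‖ with hG_def
  have hGnn : 0 ≤ G := norm_nonneg _
  clear_value s
  have hg_bound : ∀ v : V, g v ≤ G * ‖v‖ := by
    intro v
    have h1 : |g v| ≤ G * ‖v‖ := by
      have := (LinearMap.toContinuousLinearMap g).le_opNorm v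
      simpa [Real.norm_eq_abs] using this
    exact le_trans (le_abs_self _) h1
  clear_value G
  -- the operator L and the right-hand side y
  set L : V →ₗ[ℝ] V :=
    LinearMap.id + (θ * τ) • ((LinearMap.adjoint R) ∘ₗ R) - (θ * τ) • (T ∘ₗ R) with hL_def
  have hL_inner : ∀ e v : V,
      ⟪L e, v⟫ = ⟪e, v⟫ + (θ * τ) * ⟪R e, R v⟫ - (θ * τ) * ⟪T (R e), v⟫ := by
    intro e v
    simp only [hL_def, LinearMap.sub_apply, LinearMap.add_apply, LinearMap.smul_apply,
      LinearMap.comp_apply, LinearMap.id_apply, inner_sub_left, inner_add_left,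
      real_inner_smul_left, LinearMap.adjoint_inner_left]
  set y : V := (InnerProductSpace.toDual ℝ V).symm (LinearMap.toContinuousLinearMap g)
      - (θ * τ) • T F + (θ * τ) • (LinearMap.adjoint R F) with hy_def
  have hy_inner : ∀ v : V,
      ⟪y, v⟫ = g v - (θ * τ) * ⟪T F, v⟫ + (θ * τ) * ⟪F, R v⟫ := by
    intro v
    simp only [hy_def, inner_add_left, inner_sub_left, real_inner_smul_left,
      InnerProductSpace.toDual_symm_apply, LinearMap.adjoint_inner_left,
      LinearMap.coe_toContinuousLinearMap']
  clear_value L y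
  -- injectivity of L
  have hLinj : Function.Injective L := by
    rw [injective_iff_map_eq_zero]
    intro e he
    have h1 : ⟪L e, e⟫ = 0 := by rw [he]; exact inner_zero_left e
    rw [hL_inner] at h1
    rw [real_inner_self_eq_norm_sq, real_inner_self_eq_norm_sq] at h1
    have hip : ⟪T (R e), e⟫ ≤ c * ‖R e‖ * ‖e‖ := by
      have h2 := le_trans (le_abs_self _) (abs_real_inner_le_norm (T (R e)) e)
      have h3 : ‖T (R e)‖ * ‖e‖ ≤ c * ‖R e‖ * ‖e‖ :=
        mul_le_mul_of_nonneg_right (hT (R e)) (norm_nonneg e)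
      linarith
    clear hL_inner hy_inner hL_def hy_def hg_bound he
    have e1 : τ * (c * ‖R e‖ * ‖e‖) ≤ (c * s) * (τ * ‖R e‖ ^ 2 + ‖e‖ ^ 2) / 2 := by
      rw [← hs2]
      nlinarith [mul_nonneg (mul_nonneg hc hs.le) (sq_nonneg (s * ‖R e‖ - ‖e‖))]
    have e2 : θ * τ * (inner ℝ (T (R e)) e)
        ≤ θ * ((c * s) * (τ * ‖R e‖ ^ 2 + ‖e‖ ^ 2) / 2) := by
      have e2a : θ * τ * (inner ℝ (T (R e)) e) ≤ θ * (τ * (c * ‖R e‖ * ‖e‖)) := by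
        nlinarith [mul_le_mul_of_nonneg_left hip (mul_nonneg hθ0.le hτ.le)]
      have e2b := mul_le_mul_of_nonneg_left e1 hθ0.le
      linarith
    have hu : θ * (c * s) < 1 := by nlinarith [mul_nonneg hc hs.le]
    have he0 : ‖e‖ ^ 2 ≤ 0 := by
      nlinarith [h1, e2, hu, sq_nonneg ‖e‖,
        mul_nonneg hθ0.le (mul_nonneg hτ.le (sq_nonneg ‖R e‖)),
        mul_nonneg (mul_nonneg hθ0.le (mul_nonneg hc hs.le))
          (mul_nonneg hτ.le (sq_nonneg ‖R e‖))]
    have : ‖e‖ = 0 := by nlinarith [norm_nonneg e]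
    exact norm_eq_zero.mp this
  have hLsurj : Function.Surjective L :=
    LinearMap.injective_iff_surjective.mp hLinj
  -- characterization of solutions
  have hchar : ∀ (B : E) (e : V),
      ((∀ w : E, τ⁻¹ * ⟪B, w⟫ + ⟪R e, w⟫ = ⟪F, w⟫) ∧
       (∀ v : V, ⟪e, v⟫ + θ * ⟪T B, v⟫ - θ * ⟪B, R v⟫ = g v)) ↔
      (B = τ • (F - R e) ∧ L e = y) := by
    intro B e
    constructor
    · rintro ⟨h1, h2⟩
      have hvec : τ⁻¹ • B + R e - F = 0 := by
        have h0 : ∀ w : E, ⟪τ⁻¹ • B + R e - F, w⟫ = 0 := by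
          intro w
          rw [inner_sub_left, inner_add_left, real_inner_smul_left]
          linarith [h1 w]
        have := h0 (τ⁻¹ • B + R e - F)
        rwa [inner_self_eq_zero] at this
      have hB : B = τ • (F - R e) := by
        have h4 : τ⁻¹ • B = F - R e := by
          rw [sub_eq_zero] at hvec
          rw [← hvec]; abel
        have := congrArg (fun x : E => τ • x) h4
        simpa [smul_smul, mul_inv_cancel₀ hτ.ne'] using this
      refine ⟨hB, ?_⟩
      have hvec2 : ∀ v : V, ⟪L e - y, v⟫ = 0 := by
        intro v
        have h2v := h2 v
        rw [hB] at h2v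
        simp only [map_smul, map_sub, real_inner_smul_left, inner_sub_left] at h2v
        rw [inner_sub_left, hL_inner, hy_inner]
        linarith [h2v]
      have := hvec2 (L e - y)
      rw [inner_self_eq_zero, sub_eq_zero] at this
      exact this
    · rintro ⟨hB, hLe⟩
      constructor
      · intro w
        rw [hB]
        rw [real_inner_smul_left, inner_sub_left]
        field_simp
        ring
      · intro v
        have h5 : ⟪L e, v⟫ = ⟪y, v⟫ := by rw [hLe]
        rw [hL_inner, hy_inner] at h5
        rw [hB]
        simp only [map_smul, map_sub, real_inner_smul_left, inner_sub_left]
        linarith [h5]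
  obtain ⟨e₀, he₀⟩ := hLsurj y
  constructor
  · -- existence and uniqueness
    refine ⟨(τ • (F - R e₀), e₀), ?_, ?_⟩
    · exact (hchar (τ • (F - R e₀)) e₀).mpr ⟨rfl, he₀⟩
    · rintro ⟨B, e⟩ hsol
      obtain ⟨hB, hLe⟩ := (hchar B e).mp hsol
      have he : e = e₀ := hLinj (by rw [hLe, he₀])
      subst he
      exact Prod.ext hB rfl
  · -- divergence-free and stability
    intro B e hsol
    obtain ⟨hB, hLe⟩ := (hchar B e).mp hsol
    obtain ⟨h1, h2⟩ := hsol
    have hDB : D B = 0 := by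
      have hDRe : D (R e) = 0 := by
        have := LinearMap.congr_fun hDR e
        simpa using this
      rw [hB, map_smul, map_sub, hF, hDRe]
      simp
    refine ⟨hDB, ?_⟩
    -- the energy identity
    have hvecF : τ⁻¹ • B + R e = F := by
      have h4 : τ⁻¹ • (τ • (F - R e)) = F - R e := by
        rw [smul_smul, inv_mul_cancel₀ hτ.ne', one_smul]
      rw [hB, h4]; abel
    have hFnorm : τ * ‖F‖ ^ 2 = τ⁻¹ * ‖B‖ ^ 2 + 2 * ⟪B, R e⟫ + τ * ‖R e‖ ^ 2 := by
      have hexp : ‖F‖ ^ 2 = τ⁻¹ * (τ⁻¹ * ‖B‖ ^ 2) + 2 * (τ⁻¹ * ⟪B, R e⟫) + ‖R e‖ ^ 2 := by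
        rw [← hvecF, ← real_inner_self_eq_norm_sq, real_inner_add_add_self,
          real_inner_smul_left, real_inner_smul_left, real_inner_smul_right,
          real_inner_self_eq_norm_sq, real_inner_self_eq_norm_sq]
      rw [hexp]
      field_simp
    have h2e := h2 e
    rw [real_inner_self_eq_norm_sq] at h2e
    have hge : g e ≤ G * ‖e‖ := hg_bound e
    clear hchar hL_inner hy_inner hL_def hy_def he₀ hLe h1 h2 hLinj hLsurj hDR
      hPoincare hvecF hB hF hg_bound
    clear L y e₀ hG_def
    -- abbreviations
    set X : ℝ := τ⁻¹ * ‖B‖ ^ 2 with hX_def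
    set Y : ℝ := τ * ‖R e‖ ^ 2 with hY_def
    set Z : ℝ := ‖e‖ ^ 2 with hZ_def
    have hXnn : 0 ≤ X := mul_nonneg (inv_nonneg.mpr hτ.le) (sq_nonneg _)
    have hYnn : 0 ≤ Y := mul_nonneg hτ.le (sq_nonneg _)
    have hZnn : 0 ≤ Z := sq_nonneg _
    clear_value X Y Z
    have hBRe : θ * ⟪B, R e⟫ = Z + θ * ⟪T B, e⟫ - g e := by linarith [h2e]
    have hiden : θ * X + θ * Y + 2 * Z + 2 * θ * ⟪T B, e⟫ - 2 * (g e)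
        = θ * (τ * ‖F‖ ^ 2) := by
      linear_combination (-θ) * hFnorm - 2 * hBRe
    -- bounds
    have hip : -(⟪T B, e⟫) ≤ c * ‖B‖ * ‖e‖ := by
      have h6 := neg_abs_le (inner ℝ (T B) e)
      have h7 := abs_real_inner_le_norm (T B) e
      have h8 : ‖T B‖ * ‖e‖ ≤ c * ‖B‖ * ‖e‖ :=
        mul_le_mul_of_nonneg_right (hT B) (norm_nonneg e)
      linarith
    have hyoung : c * ‖B‖ * ‖e‖ ≤ (c * s) * ((X + Z) / 2) := by
      have h10 : (s⁻¹ * ‖B‖) ^ 2 = X := by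
        rw [hX_def, mul_pow, ← hs2, inv_pow]
      have h12 : (s⁻¹ * ‖B‖) * ‖e‖ ≤ (X + Z) / 2 := by
        nlinarith [sq_nonneg (s⁻¹ * ‖B‖ - ‖e‖), h10, hZ_def]
      have hss : s * s⁻¹ = 1 := mul_inv_cancel₀ hs.ne'
      have h13 : c * ‖B‖ * ‖e‖ = (c * s) * ((s⁻¹ * ‖B‖) * ‖e‖) := by
        have h14 : (c * s) * ((s⁻¹ * ‖B‖) * ‖e‖) = (s * s⁻¹) * (c * ‖B‖ * ‖e‖) := by ring
        rw [h14, hss, one_mul]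
      calc c * ‖B‖ * ‖e‖ = (c * s) * ((s⁻¹ * ‖B‖) * ‖e‖) := h13
        _ ≤ (c * s) * ((X + Z) / 2) :=
          mul_le_mul_of_nonneg_left h12 (mul_nonneg hc hs.le)
    -- main estimate
    set α : ℝ := 1 - c * s with hα_def
    have hα : 0 < α := by simp only [hα_def]; linarith [hsmall]
    have hα1 : α ≤ 1 := by
      simp only [hα_def]
      nlinarith [mul_nonneg hc hs.le]
    clear_value α
    set N : ℝ := Real.sqrt (Z + Y + X) with hN_def
    have hNnn : 0 ≤ N := Real.sqrt_nonneg _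
    have hN2 : N ^ 2 = Z + Y + X := Real.sq_sqrt (by linarith)
    have heN : ‖e‖ ≤ N := by
      have : ‖e‖ = Real.sqrt Z := by rw [hZ_def, Real.sqrt_sq (norm_nonneg e)]
      rw [this, hN_def]
      exact Real.sqrt_le_sqrt (by linarith)
    clear_value N
    have hmain : α * θ * N ^ 2 ≤ θ * (τ * ‖F‖ ^ 2) + 2 * G * N := by
      have hcs : 0 ≤ c * s := mul_nonneg hc hs.le
      have hip' := mul_le_mul_of_nonneg_left hip hθ0.le
      have hyoung' := mul_le_mul_of_nonneg_left hyoung hθ0.le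
      have hstep : θ * X + θ * Y + 2 * Z
          ≤ θ * (τ * ‖F‖ ^ 2) + θ * ((c * s) * ((X + Z) / 2)) * 2 + 2 * (G * ‖e‖) := by
        linarith [hiden, hip', hyoung', hge]
      have hGN : G * ‖e‖ ≤ G * N := mul_le_mul_of_nonneg_left heN hGnn
      have h1' : α * θ * N ^ 2 = θ * (Z + Y + X) - (c * s) * (θ * (Z + Y + X)) := by
        rw [hα_def, hN2]; ring
      have h2' : α * θ * N ^ 2 ≤ θ * X + θ * Y + 2 * Z - θ * ((c * s) * ((X + Z) / 2)) * 2 := by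
        have t1 : 0 ≤ θ * (c * s) * Y := mul_nonneg (mul_nonneg hθ0.le hcs) hYnn
        have t2 : 0 ≤ (2 - θ) * Z := mul_nonneg (by linarith) hZnn
        linarith [h1', t1, t2]
      linarith [h2', hstep, hGN]
    -- conclude
    have hu : Real.sqrt (1 + θ ^ 2 / 2) ^ 2 = 1 + θ ^ 2 / 2 :=
      Real.sq_sqrt (by nlinarith)
    have hunn : 0 < Real.sqrt (1 + θ ^ 2 / 2) := Real.sqrt_pos.mpr (by nlinarith)
    have hFnn : 0 ≤ s * ‖F‖ + G :=
      add_nonneg (mul_nonneg hs.le (norm_nonneg F)) hGnn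
    have hsqbound : (α * θ * N) ^ 2 ≤ (2 * Real.sqrt (1 + θ ^ 2 / 2) * (s * ‖F‖ + G)) ^ 2 := by
      have hq : α ^ 2 * θ ^ 2 * N ^ 2 ≤ 2 * θ ^ 2 * (τ * ‖F‖ ^ 2) + 4 * G ^ 2 := by
        have hm' := mul_le_mul_of_nonneg_left hmain (mul_nonneg hα.le hθ0.le)
        have ht3 : 0 ≤ (1 - α) * θ ^ 2 * (τ * ‖F‖ ^ 2) :=
          mul_nonneg (mul_nonneg (by linarith) (sq_nonneg θ))
            (mul_nonneg hτ.le (sq_nonneg ‖F‖))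
        linarith [hm', ht3, sq_nonneg (α * θ * N - 2 * G)]
      have hexpand : (2 * Real.sqrt (1 + θ ^ 2 / 2) * (s * ‖F‖ + G)) ^ 2
          = 4 * (1 + θ ^ 2 / 2) * (s * ‖F‖ + G) ^ 2 := by
        rw [mul_pow, mul_pow, hu]; ring
      rw [hexpand]
      have hsF : (s * ‖F‖) ^ 2 = τ * ‖F‖ ^ 2 := by rw [mul_pow, hs2]
      have m : 0 ≤ s * ‖F‖ := mul_nonneg hs.le (norm_nonneg F)
      have step1 : G ^ 2 ≤ (s * ‖F‖ + G) ^ 2 := by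
        linarith [mul_nonneg m hGnn, sq_nonneg (s * ‖F‖)]
      have step2 : τ * ‖F‖ ^ 2 ≤ (s * ‖F‖ + G) ^ 2 := by
        rw [← hsF]
        linarith [mul_nonneg m hGnn, sq_nonneg G]
      have e3 : (α * θ * N) ^ 2 = α ^ 2 * θ ^ 2 * N ^ 2 := by ring
      rw [e3]
      have t4 := mul_le_mul_of_nonneg_left step2 (by positivity : (0:ℝ) ≤ 2 * θ ^ 2)
      have t5 := mul_le_mul_of_nonneg_left step1 (by norm_num : (0:ℝ) ≤ 4)
      calc α ^ 2 * θ ^ 2 * N ^ 2 ≤ 2 * θ ^ 2 * (τ * ‖F‖ ^ 2) + 4 * G ^ 2 := hq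
        _ ≤ 2 * θ ^ 2 * (s * ‖F‖ + G) ^ 2 + 4 * (s * ‖F‖ + G) ^ 2 := by linarith
        _ = 4 * (1 + θ ^ 2 / 2) * (s * ‖F‖ + G) ^ 2 := by ring
    have hfinal : α * θ * N ≤ 2 * Real.sqrt (1 + θ ^ 2 / 2) * (s * ‖F‖ + G) := by
      have hb : 0 ≤ 2 * Real.sqrt (1 + θ ^ 2 / 2) * (s * ‖F‖ + G) :=
        mul_nonneg (by positivity) hFnn
      have ha : 0 ≤ α * θ * N := mul_nonneg (mul_nonneg hα.le hθ0.le) hNnn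
      have h15 := Real.sqrt_le_sqrt hsqbound
      rwa [Real.sqrt_sq ha, Real.sqrt_sq hb] at h15
    -- rewrite goal
    have hgoalN : Real.sqrt (Z + Y + X + ‖D B‖ ^ 2) = N := by
      rw [hDB, norm_zero, hN_def]
      norm_num
    rw [hgoalN]
    have hxpos : 0 < α * (θ / 2) * (Real.sqrt (1 + θ ^ 2 / 2))⁻¹ :=
      mul_pos (mul_pos hα (by linarith)) (inv_pos.mpr hunn)
    rw [inv_mul_eq_div, le_div_iff₀ hxpos]
    calc N * (α * (θ / 2) * (Real.sqrt (1 + θ ^ 2 / 2))⁻¹)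
        = (α * θ * N) * ((Real.sqrt (1 + θ ^ 2 / 2))⁻¹ / 2) := by ring
      _ ≤ (2 * Real.sqrt (1 + θ ^ 2 / 2) * (s * ‖F‖ + G)) * ((Real.sqrt (1 + θ ^ 2 / 2))⁻¹ / 2) := by
          apply mul_le_mul_of_nonneg_right _ (by positivity)
          linarith [hfinal]
      _ = (s * ‖F‖ + G) * (Real.sqrt (1 + θ ^ 2 / 2) * (Real.sqrt (1 + θ ^ 2 / 2))⁻¹) := by ring
      _ = s * ‖F‖ + G := by rw [mul_inv_cancel₀ hunn.ne', mul_one]
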